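/- Let F_r be a free group of rank r and let H = ⟨h⟩ be a cyclic subgroup generated by a nontrivial element h. If the image of h in the abelianization F_r/[F_r,F_r] is a primitive element (i.e., part of a basis of the free abelian group ℤ^r), then H is a retract of F_r. -/

import Mathlib

/-- `H` is a retract of `G`: there is an endomorphism of `G` with image `H`
fixing `H` pointwise. -/
def IsRetractOf {G : Type*} [Group G] (H : Subgroup G) : Prop :=
  ∃ φ : G →* G, (∀ g, φ g ∈ H) ∧ ∀ h ∈ H, φ h = h
/-- The exponent sum of the `i`-th generator in an element of the free group. -/
noncomputable def expSum {r : ℕ} (i : Fin r) (h : FreeGroup (Fin r)) : ℤ :=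
  Multiplicative.toAdd
    (FreeGroup.lift (fun j => Multiplicative.ofAdd (if j = i then (1 : ℤ) else 0)) h)

/-- Bézout's identity for the gcd of a finite family of integers. -/
lemma bezout_finset {ι : Type*} [DecidableEq ι] (s : Finset ι) (a : ι → ℤ) :
    ∃ c : ι → ℤ, ∑ i ∈ s, c i * a i = s.gcd a := by
  classical
  induction s using Finset.induction_on with
  | empty => exact ⟨0, by simp⟩
  | @insert i s hi ih =>
    obtain ⟨c, hc⟩ := ih
    set A := Int.gcdA (a i) (s.gcd a)
    set B := Int.gcdB (a i) (s.gcd a)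
    refine ⟨fun j => if j = i then A else B * c j, ?_⟩
    have h2 : ∑ x ∈ s, (if x = i then A else B * c x) * a x = (∑ x ∈ s, c x * a x) * B := by
      rw [Finset.sum_mul]
      exact Finset.sum_congr rfl fun j hj => by
        rw [if_neg (by rintro rfl; exact hi hj)]; ring
    rw [Finset.sum_insert hi, Finset.gcd_insert, ← Int.coe_gcd, Int.gcd_eq_gcd_ab,
      h2, hc]
    beta_reduce
    rw [if_pos rfl]
    ring

/-- If the image of `h ≠ 1` in the abelianization of the free group `F_r` is
primitive (the exponent sums have gcd `1`), then `⟨h⟩` is a retract of `F_r`. -/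
theorem cyclic_retract_of_primitive {r : ℕ} (h : FreeGroup (Fin r)) (hne : h ≠ 1)
    (hprim : Finset.univ.gcd (fun i => expSum i h) = 1) :
    IsRetractOf (Subgroup.zpowers h) := by
  classical
  obtain ⟨c, hc⟩ := bezout_finset Finset.univ (fun i => expSum i h)
  rw [hprim] at hc
  set D : Fin r → (FreeGroup (Fin r) →* Multiplicative ℤ) :=
    fun i => FreeGroup.lift (fun j => Multiplicative.ofAdd (if j = i then (1 : ℤ) else 0))
    with hD
  set E : FreeGroup (Fin r) →* Multiplicative ℤ :=
    FreeGroup.lift (fun j => Multiplicative.ofAdd (c j)) with hE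
  have hEP : E = ∏ i : Fin r, (zpowGroupHom (c i)).comp (D i) := by
    apply FreeGroup.ext_hom
    intro j
    rw [hE, FreeGroup.lift_apply_of, MonoidHom.finset_prod_apply]
    simp only [MonoidHom.comp_apply, hD, FreeGroup.lift_apply_of, zpowGroupHom_apply]
    apply Multiplicative.toAdd.injective
    rw [toAdd_prod]
    simp [toAdd_zpow, mul_comm]
  have hEh : Multiplicative.toAdd (E h) = 1 := by
    rw [hEP, MonoidHom.finset_prod_apply, toAdd_prod]
    simp only [MonoidHom.comp_apply, zpowGroupHom_apply, toAdd_zpow, smul_eq_mul]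
    rw [← hc]
    exact Finset.sum_congr rfl fun i _ => rfl
  refine ⟨(zpowersHom _ h).comp E, fun g => ?_, fun x hx => ?_⟩
  · exact ⟨Multiplicative.toAdd (E g), rfl⟩
  · obtain ⟨n, rfl⟩ := hx
    rw [map_zpow]
    congr 1
    show h ^ (Multiplicative.toAdd (E h)) = h
    rw [hEh, zpow_one]
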